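/- Let w ∈ W be a basic involution and let ξ_1, ξ_2 : Supp(w) → ℂ^× be two distinct maps. Then the coadjoint U-orbits Θ_{w,ξ_1} and Θ_{w,ξ_2} are distinct sets: Θ_{w,ξ_1} ≠ Θ_{w,ξ_2}. -/

import Mathlib

/-!
The Weyl group of type `Dₙ`, realized as the group of permutations `w` of `ℤ`
supported on `{±1, …, ±n}` with `w (-i) = - w i` and an even number of sign changes.
-/

open Equiv

/-- The simple reflections of type `Dₙ`, indexed by `i ∈ {1, …, n}`:
`sᵢ = (i, i+1)(-i, -(i+1))` for `1 ≤ i ≤ n - 1`, and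
`sₙ = (n-1, -n)(-(n-1), n)`. -/
def simpleRefl (n : ℕ) (i : ℕ) : Equiv.Perm ℤ :=
  if i < n then Equiv.swap (i : ℤ) ((i : ℤ) + 1) * Equiv.swap (-(i : ℤ)) (-((i : ℤ) + 1))
  else Equiv.swap ((n : ℤ) - 1) (-(n : ℤ)) * Equiv.swap (-((n : ℤ) - 1)) (n : ℤ)

/-- A word in the letters `{1, …, n}` (indices of simple reflections). -/
def IsWord (n : ℕ) (L : List ℕ) : Prop := ∀ i ∈ L, 1 ≤ i ∧ i ≤ n

/-- The product `s_{i₁} ⋯ s_{i_l}` of the word `L = [i₁, …, i_l]`. -/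
def wordProd (n : ℕ) (L : List ℕ) : Equiv.Perm ℤ := (L.map (simpleRefl n)).prod

/-- Membership in the Weyl group `W` of type `Dₙ`: a permutation of `ℤ` commuting with
negation, fixing every integer of absolute value `> n`, and with an even number of
`i ∈ {1, …, n}` such that `w i < 0`. -/
def IsD (n : ℕ) (w : Equiv.Perm ℤ) : Prop :=
  (∀ i : ℤ, w (-i) = -(w i)) ∧ (∀ i : ℤ, (n : ℤ) < |i| → w i = i) ∧
    Even (((Finset.Icc (1 : ℤ) (n : ℤ)).filter fun i => w i < 0).card)

/-- The length `ℓ(w)`: the minimal number of factors in an expression of `w` as a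
product of simple reflections. -/
noncomputable def weylLength (n : ℕ) (w : Equiv.Perm ℤ) : ℕ :=
  sInf {l | ∃ L : List ℕ, IsWord n L ∧ L.length = l ∧ wordProd n L = w}

/-- `L` is a reduced decomposition of `w`. -/
def IsReducedWord (n : ℕ) (w : Equiv.Perm ℤ) (L : List ℕ) : Prop :=
  IsWord n L ∧ wordProd n L = w ∧ L.length = weylLength n w

/-- `w` is a basic involution: `w ∈ W`, `w² = id`, and `w i ≠ -i` for all `i ∈ {1, …, n}`. -/
def IsBasicInvolution (n : ℕ) (w : Equiv.Perm ℤ) : Prop :=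
  IsD n w ∧ w * w = 1 ∧ ∀ i : ℤ, 1 ≤ i → i ≤ (n : ℤ) → w i ≠ -i

/-!
The group `SO₂ₙ(ℂ)`, its subgroups `B`, `U`, `T`, and the coadjoint action on `𝔫*`.
Rows and columns of `2n × 2n` matrices are indexed by `1, …, n, -n, …, -1`; the index
`i > 0` labels row `i - 1` (0-based) and the index `-j` labels row `2n - j` (0-based).
-/

/-- `2n × 2n` complex matrices. -/
abbrev Mat (n : ℕ) : Type := Matrix (Fin (2 * n)) (Fin (2 * n)) ℂ

/-- The matrix `J` with `1`'s on the antidiagonal and `0`'s elsewhere. -/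
def antidiagJ (n : ℕ) : Mat n :=
  Matrix.of fun i j => if (i : ℕ) + (j : ℕ) = 2 * n - 1 then 1 else 0

/-- The strictly lower-triangular part of a matrix. -/
def lowPart (n : ℕ) (M : Mat n) : Mat n :=
  Matrix.of fun i j => if (j : ℕ) < (i : ℕ) then M i j else 0

/-- Membership in `SO₂ₙ(ℂ) = {g ∈ SL₂ₙ(ℂ) : gᵀ J g = J}`. -/
def IsSO (n : ℕ) (g : Mat n) : Prop :=
  g.det = 1 ∧ g.transpose * antidiagJ n * g = antidiagJ n

/-- The Borel subgroup `B`: upper-triangular matrices in `SO₂ₙ(ℂ)`. -/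
def Bset (n : ℕ) : Set (Mat n) :=
  {g | IsSO n g ∧ ∀ i j : Fin (2 * n), (j : ℕ) < (i : ℕ) → g i j = 0}

/-- The unipotent radical `U`: upper-triangular matrices in `SO₂ₙ(ℂ)` with `1`'s on
the diagonal. -/
def Uset (n : ℕ) : Set (Mat n) := {g | g ∈ Bset n ∧ ∀ i, g i i = 1}

/-- The maximal torus `T`: diagonal matrices in `SO₂ₙ(ℂ)`. -/
def Tset (n : ℕ) : Set (Mat n) := {g | IsSO n g ∧ ∀ i j, i ≠ j → g i j = 0}

/-- The coadjoint action `b.λ = (b λ b⁻¹)_low`. -/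
noncomputable def coad (n : ℕ) (b lam : Mat n) : Mat n := lowPart n (b * lam * b⁻¹)

/-- The support of an involution `w`, encoded as triples: `(i, j, false)` stands for the
root `ε_{i+1} - ε_{j+1}` (so `w (i+1) = j+1`), `(i, j, true)` for `ε_{i+1} + ε_{j+1}`
(so `w (i+1) = -(j+1)`); here `i < j` as elements of `Fin n` (0-based indexing). -/
def suppFinset (n : ℕ) (w : Equiv.Perm ℤ) : Finset (Fin n × Fin n × Bool) :=
  Finset.univ.filter fun r =>
    r.1 < r.2.1 ∧
      ((r.2.2 = false ∧ w (((r.1 : ℕ) : ℤ) + 1) = ((r.2.1 : ℕ) : ℤ) + 1) ∨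
       (r.2.2 = true ∧ w (((r.1 : ℕ) : ℤ) + 1) = -(((r.2.1 : ℕ) : ℤ) + 1)))

/-- The basis vector `e_β*` of `𝔫*`: for `β = ε_i - ε_j` (1-based `i < j`),
`e_β* = E_{j,i} - E_{-i,-j}`; for `β = ε_i + ε_j`, `e_β* = E_{-j,i} - E_{-i,j}`. -/
def eStar (n : ℕ) (r : Fin n × Fin n × Bool) : Mat n :=
  if r.2.2 then
    Matrix.single ⟨2 * n - 1 - (r.2.1 : ℕ), by have := r.2.1.isLt; omega⟩
        ⟨(r.1 : ℕ), by have := r.1.isLt; omega⟩ 1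
      - Matrix.single ⟨2 * n - 1 - (r.1 : ℕ), by have := r.1.isLt; omega⟩
        ⟨(r.2.1 : ℕ), by have := r.2.1.isLt; omega⟩ 1
  else
    Matrix.single ⟨(r.2.1 : ℕ), by have := r.2.1.isLt; omega⟩
        ⟨(r.1 : ℕ), by have := r.1.isLt; omega⟩ 1
      - Matrix.single ⟨2 * n - 1 - (r.1 : ℕ), by have := r.1.isLt; omega⟩
        ⟨2 * n - 1 - (r.2.1 : ℕ), by have := r.2.1.isLt; omega⟩ 1

/-- The linear form `f_{w,ξ} = ∑_{β ∈ Supp(w)} ξ(β) e_β*`. -/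
noncomputable def fwxi (n : ℕ) (w : Equiv.Perm ℤ) (xi : Fin n × Fin n × Bool → ℂˣ) : Mat n :=
  ∑ r ∈ suppFinset n w, ((xi r : ℂ) • eStar n r)

/-- The linear form `f_w = ∑_{β ∈ Supp(w)} e_β*`. -/
noncomputable def fw (n : ℕ) (w : Equiv.Perm ℤ) : Mat n := ∑ r ∈ suppFinset n w, eStar n r

/-- The coadjoint `B`-orbit `Ω_w` of `f_w`. -/
def OmegaSet (n : ℕ) (w : Equiv.Perm ℤ) : Set (Mat n) :=
  {m | ∃ b ∈ Bset n, m = coad n b (fw n w)}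

/-- The coadjoint `U`-orbit `Θ_{w,ξ}` of `f_{w,ξ}`. -/
def ThetaSet (n : ℕ) (w : Equiv.Perm ℤ) (xi : Fin n × Fin n × Bool → ℂˣ) : Set (Mat n) :=
  {m | ∃ u ∈ Uset n, m = coad n u (fwxi n w xi)}

/-! ### Auxiliary development for Statement 9 -/

namespace Statement9Aux

open Matrix Finset

/-- Index for the (at most two) nonzero entries of `eStar`: a support triple together
with a Boolean selecting the first (`false`) or second (`true`) matrix unit. -/
abbrev Idx (n : ℕ) := (Fin n × Fin n × Bool) × Bool

/-- Row of the selected matrix unit of `eStar`. -/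
def rowF (n : ℕ) (k : Idx n) : Fin (2 * n) :=
  if k.2 then ⟨2 * n - 1 - (k.1.1 : ℕ), by have := k.1.1.isLt; omega⟩
  else if k.1.2.2 then ⟨2 * n - 1 - (k.1.2.1 : ℕ), by have := k.1.2.1.isLt; omega⟩
  else ⟨(k.1.2.1 : ℕ), by have := k.1.2.1.isLt; omega⟩

/-- Column of the selected matrix unit of `eStar`. -/
def colF (n : ℕ) (k : Idx n) : Fin (2 * n) :=
  if k.2 then
    (if k.1.2.2 then ⟨(k.1.2.1 : ℕ), by have := k.1.2.1.isLt; omega⟩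
     else ⟨2 * n - 1 - (k.1.2.1 : ℕ), by have := k.1.2.1.isLt; omega⟩)
  else ⟨(k.1.1 : ℕ), by have := k.1.1.isLt; omega⟩

/-- Sign of the selected matrix unit of `eStar`. -/
def sgnF {n : ℕ} (k : Idx n) : ℂ := if k.2 then -1 else 1

lemma sgnF_ne_zero {n : ℕ} (k : Idx n) : sgnF k ≠ 0 := by
  unfold sgnF; split <;> norm_num

lemma eStar_eq (n : ℕ) (r : Fin n × Fin n × Bool) :
    eStar n r = Matrix.single (rowF n (r, false)) (colF n (r, false)) 1
      - Matrix.single (rowF n (r, true)) (colF n (r, true)) (1 : ℂ) := by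
  obtain ⟨i, j, t⟩ := r
  cases t <;> rfl

lemma supp_spec {n : ℕ} {w : Equiv.Perm ℤ} {r : Fin n × Fin n × Bool}
    (hr : r ∈ suppFinset n w) (hww : ∀ x : ℤ, w (w x) = x)
    (hodd : ∀ i : ℤ, w (-i) = -(w i)) :
    (r.1 : ℕ) < (r.2.1 : ℕ) ∧
      (r.2.2 = false → w (((r.1 : ℕ) : ℤ) + 1) = ((r.2.1 : ℕ) : ℤ) + 1 ∧
        w (((r.2.1 : ℕ) : ℤ) + 1) = ((r.1 : ℕ) : ℤ) + 1) ∧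
      (r.2.2 = true → w (((r.1 : ℕ) : ℤ) + 1) = -(((r.2.1 : ℕ) : ℤ) + 1) ∧
        w (((r.2.1 : ℕ) : ℤ) + 1) = -(((r.1 : ℕ) : ℤ) + 1)) := by
  obtain ⟨i, j, t⟩ := r
  simp only [suppFinset, Finset.mem_filter, Finset.mem_univ, true_and] at hr
  obtain ⟨hlt, h⟩ := hr
  have hlt' : (i : ℕ) < (j : ℕ) := hlt
  refine ⟨hlt', ?_, ?_⟩
  · rintro rfl
    have h2 : w (((i : ℕ) : ℤ) + 1) = ((j : ℕ) : ℤ) + 1 := by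
      rcases h with h | h
      · exact h.2
      · exact absurd h.1 (by simp)
    exact ⟨h2, by rw [← h2, hww]⟩
  · rintro rfl
    have h2 : w (((i : ℕ) : ℤ) + 1) = -(((j : ℕ) : ℤ) + 1) := by
      rcases h with h | h
      · exact absurd h.1 (by simp)
      · exact h.2
    refine ⟨h2, ?_⟩
    have h3 : w (-(w (((i : ℕ) : ℤ) + 1))) = -(((i : ℕ) : ℤ) + 1) := by
      rw [hodd, hww]
    rw [h2, neg_neg] at h3
    exact h3

/-- Two support triples sharing any underlying index coincide. -/
lemma supp_eq {n : ℕ} {w : Equiv.Perm ℤ} (hww : ∀ x : ℤ, w (w x) = x)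
    (hodd : ∀ i : ℤ, w (-i) = -(w i)) {r r' : Fin n × Fin n × Bool}
    (hr : r ∈ suppFinset n w) (hr' : r' ∈ suppFinset n w)
    (h : (r.1 : ℕ) = (r'.1 : ℕ) ∨ (r.1 : ℕ) = (r'.2.1 : ℕ) ∨
         (r.2.1 : ℕ) = (r'.1 : ℕ) ∨ (r.2.1 : ℕ) = (r'.2.1 : ℕ)) : r = r' := by
  obtain ⟨hlt, hf, ht⟩ := supp_spec hr hww hodd
  obtain ⟨hlt', hf', ht'⟩ := supp_spec hr' hww hodd
  obtain ⟨i, j, t⟩ := r; obtain ⟨i', j', t'⟩ := r'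
  simp only at hlt hf ht hlt' hf' ht' h ⊢
  rcases h with h | h | h | h
  · have e1 := congrArg w (show ((i : ℕ) : ℤ) + 1 = ((i' : ℕ) : ℤ) + 1 from by omega)
    cases t <;> cases t' <;>
      (first
        | rw [(hf rfl).1, (hf' rfl).1] at e1
        | rw [(hf rfl).1, (ht' rfl).1] at e1
        | rw [(ht rfl).1, (hf' rfl).1] at e1
        | rw [(ht rfl).1, (ht' rfl).1] at e1) <;>
      (simp only [Prod.mk.injEq, Fin.ext_iff, Bool.false_eq_true, Bool.true_eq_false,
        and_true, and_false]; omega)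
  · have e1 := congrArg w (show ((i : ℕ) : ℤ) + 1 = ((j' : ℕ) : ℤ) + 1 from by omega)
    cases t <;> cases t' <;>
      (first
        | rw [(hf rfl).1, (hf' rfl).2] at e1
        | rw [(hf rfl).1, (ht' rfl).2] at e1
        | rw [(ht rfl).1, (hf' rfl).2] at e1
        | rw [(ht rfl).1, (ht' rfl).2] at e1) <;>
      (simp only [Prod.mk.injEq, Fin.ext_iff, Bool.false_eq_true, Bool.true_eq_false,
        and_true, and_false]; omega)
  · have e1 := congrArg w (show ((j : ℕ) : ℤ) + 1 = ((i' : ℕ) : ℤ) + 1 from by omega)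
    cases t <;> cases t' <;>
      (first
        | rw [(hf rfl).2, (hf' rfl).1] at e1
        | rw [(hf rfl).2, (ht' rfl).1] at e1
        | rw [(ht rfl).2, (hf' rfl).1] at e1
        | rw [(ht rfl).2, (ht' rfl).1] at e1) <;>
      (simp only [Prod.mk.injEq, Fin.ext_iff, Bool.false_eq_true, Bool.true_eq_false,
        and_true, and_false]; omega)
  · have e1 := congrArg w (show ((j : ℕ) : ℤ) + 1 = ((j' : ℕ) : ℤ) + 1 from by omega)
    cases t <;> cases t' <;>
      (first
        | rw [(hf rfl).2, (hf' rfl).2] at e1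
        | rw [(hf rfl).2, (ht' rfl).2] at e1
        | rw [(ht rfl).2, (hf' rfl).2] at e1
        | rw [(ht rfl).2, (ht' rfl).2] at e1) <;>
      (simp only [Prod.mk.injEq, Fin.ext_iff, Bool.false_eq_true, Bool.true_eq_false,
        and_true, and_false]; omega)

lemma col_lt_row {n : ℕ} {w : Equiv.Perm ℤ} (hww : ∀ x : ℤ, w (w x) = x)
    (hodd : ∀ i : ℤ, w (-i) = -(w i)) {k : Idx n} (hk : k.1 ∈ suppFinset n w) :
    (colF n k : ℕ) < (rowF n k : ℕ) := by
  obtain ⟨hlt, -, -⟩ := supp_spec hk hww hodd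
  obtain ⟨⟨i, j, t⟩, s⟩ := k
  simp only at hlt
  have hi := i.isLt; have hj := j.isLt
  cases s <;> cases t <;> simp [rowF, colF] <;> omega

lemma rowF_inj {n : ℕ} {w : Equiv.Perm ℤ} (hww : ∀ x : ℤ, w (w x) = x)
    (hodd : ∀ i : ℤ, w (-i) = -(w i)) {k k' : Idx n}
    (hk : k.1 ∈ suppFinset n w) (hk' : k'.1 ∈ suppFinset n w)
    (h : rowF n k = rowF n k') : k = k' := by
  obtain ⟨hlt, -, -⟩ := supp_spec hk hww hodd
  obtain ⟨hlt', -, -⟩ := supp_spec hk' hww hodd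
  obtain ⟨⟨i, j, t⟩, s⟩ := k; obtain ⟨⟨i', j', t'⟩, s'⟩ := k'
  simp only at hlt hlt' hk hk'
  have hi := i.isLt; have hj := j.isLt; have hi' := i'.isLt; have hj' := j'.isLt
  cases s <;> cases s' <;> cases t <;> cases t' <;>
    simp [rowF, colF, Fin.mk.injEq] at h <;>
    first
    | (exfalso; omega)
    | (have h3 := supp_eq hww hodd hk hk' (by first | (dsimp only; omega) | (simp only [Fin.ext_iff] at h; dsimp only; omega))
       first
       | (exact congrArg (fun x => (x, false)) h3)
       | (exact congrArg (fun x => (x, true)) h3)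
       | (exfalso
          simp only [Prod.mk.injEq, Fin.ext_iff, Bool.true_eq_false, Bool.false_eq_true,
            and_false, false_and, and_true, true_and] at h3
          try omega))

lemma colF_inj {n : ℕ} {w : Equiv.Perm ℤ} (hww : ∀ x : ℤ, w (w x) = x)
    (hodd : ∀ i : ℤ, w (-i) = -(w i)) {k k' : Idx n}
    (hk : k.1 ∈ suppFinset n w) (hk' : k'.1 ∈ suppFinset n w)
    (h : colF n k = colF n k') : k = k' := by
  obtain ⟨hlt, -, -⟩ := supp_spec hk hww hodd
  obtain ⟨hlt', -, -⟩ := supp_spec hk' hww hodd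
  obtain ⟨⟨i, j, t⟩, s⟩ := k; obtain ⟨⟨i', j', t'⟩, s'⟩ := k'
  simp only at hlt hlt' hk hk'
  have hi := i.isLt; have hj := j.isLt; have hi' := i'.isLt; have hj' := j'.isLt
  cases s <;> cases s' <;> cases t <;> cases t' <;>
    simp [rowF, colF, Fin.mk.injEq] at h <;>
    first
    | (exfalso; omega)
    | (have h3 := supp_eq hww hodd hk hk' (by first | (dsimp only; omega) | (simp only [Fin.ext_iff] at h; dsimp only; omega))
       first
       | (exact congrArg (fun x => (x, false)) h3)
       | (exact congrArg (fun x => (x, true)) h3)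
       | (exfalso
          simp only [Prod.mk.injEq, Fin.ext_iff, Bool.true_eq_false, Bool.false_eq_true,
            and_false, false_and, and_true, true_and] at h3
          try omega))


lemma fwxi_apply {n : ℕ} (w : Equiv.Perm ℤ) (xi : Fin n × Fin n × Bool → ℂˣ)
    (a b : Fin (2 * n)) :
    fwxi n w xi a b = ∑ r ∈ suppFinset n w, (xi r : ℂ) * eStar n r a b := by
  rw [fwxi, Matrix.sum_apply]
  simp [Matrix.smul_apply]

/-- A nonzero entry of `f_{w,ξ}` sits at a rook position. -/
lemma fwxi_support {n : ℕ} (w : Equiv.Perm ℤ) (xi : Fin n × Fin n × Bool → ℂˣ)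
    {a b : Fin (2 * n)} (h : fwxi n w xi a b ≠ 0) :
    ∃ k : Idx n, k.1 ∈ suppFinset n w ∧ rowF n k = a ∧ colF n k = b := by
  by_contra hc
  push_neg at hc
  apply h
  rw [fwxi_apply]
  refine Finset.sum_eq_zero fun r hr => ?_
  rw [eStar_eq]
  have h1 : ¬(rowF n (r, false) = a ∧ colF n (r, false) = b) := by
    intro ⟨u1, u2⟩; exact hc (r, false) hr u1 u2
  have h2 : ¬(rowF n (r, true) = a ∧ colF n (r, true) = b) := by
    intro ⟨u1, u2⟩; exact hc (r, true) hr u1 u2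
  rw [Matrix.sub_apply, Matrix.single_apply_of_ne _ _ _ _ _ h1,
    Matrix.single_apply_of_ne _ _ _ _ _ h2]
  ring

/-- Value of `f_{w,ξ}` at a rook position. -/
lemma fwxi_rook {n : ℕ} {w : Equiv.Perm ℤ} (hww : ∀ x : ℤ, w (w x) = x)
    (hodd : ∀ i : ℤ, w (-i) = -(w i)) (xi : Fin n × Fin n × Bool → ℂˣ)
    {k : Idx n} (hk : k.1 ∈ suppFinset n w) :
    fwxi n w xi (rowF n k) (colF n k) = sgnF k * (xi k.1 : ℂ) := by
  rw [fwxi_apply]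
  rw [Finset.sum_eq_single k.1]
  · rw [eStar_eq, Matrix.sub_apply]
    have hd : rowF n (k.1, false) ≠ rowF n (k.1, true) := by
      intro he
      have := rowF_inj hww hodd (k := ((k.1, false) : Idx n)) (k' := ((k.1, true) : Idx n)) hk hk he
      simp at this
    cases hs : k.2 with
    | false =>
      have hk' : k = (k.1, false) := by rw [← hs]
      rw [hk'] at hd ⊢
      rw [Matrix.single_apply_same,
        Matrix.single_apply_of_ne _ _ _ _ _ (by rintro ⟨u1, -⟩; exact hd u1.symm)]
      simp [sgnF]
    | true =>
      have hk' : k = (k.1, true) := by rw [← hs]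
      rw [hk'] at hd ⊢
      rw [Matrix.single_apply_same,
        Matrix.single_apply_of_ne _ _ _ _ _ (by rintro ⟨u1, -⟩; exact hd u1)]
      simp [sgnF]
  · intro r hr hne
    rw [eStar_eq, Matrix.sub_apply]
    have h1 : ¬(rowF n (r, false) = rowF n k ∧ colF n (r, false) = colF n k) := by
      rintro ⟨u1, -⟩
      have := rowF_inj hww hodd (k := ((r, false) : Idx n)) hr hk u1
      rw [← this] at hne; exact hne rfl
    have h2 : ¬(rowF n (r, true) = rowF n k ∧ colF n (r, true) = colF n k) := by
      rintro ⟨u1, -⟩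
      have := rowF_inj hww hodd (k := ((r, true) : Idx n)) hr hk u1
      rw [← this] at hne; exact hne rfl
    rw [Matrix.single_apply_of_ne _ _ _ _ _ h1,
      Matrix.single_apply_of_ne _ _ _ _ _ h2]
    ring
  · intro hk'; exact absurd hk hk'

/-- `f_{w,ξ}` is strictly lower triangular. -/
lemma fwxi_lower {n : ℕ} {w : Equiv.Perm ℤ} (hww : ∀ x : ℤ, w (w x) = x)
    (hodd : ∀ i : ℤ, w (-i) = -(w i)) (xi : Fin n × Fin n × Bool → ℂˣ)
    {a b : Fin (2 * n)} (h : ¬((b : ℕ) < (a : ℕ))) : fwxi n w xi a b = 0 := by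
  by_contra h0
  obtain ⟨k, hk, hr, hc⟩ := fwxi_support w xi h0
  have := col_lt_row hww hodd hk
  rw [hr, hc] at this
  exact h this

/-- A matrix that is upper triangular with respect to an injective weighting,
with unit diagonal, has determinant 1. -/
lemma det_eq_one_of_upperTri {ι : Type*} [Fintype ι] [DecidableEq ι] {N : ℕ}
    (M : Matrix ι ι ℂ) (b : ι → Fin N) (hb : Function.Injective b)
    (htri : ∀ p q, b q < b p → M p q = 0) (hdiag : ∀ p, M p p = 1) : M.det = 1 := by
  letI : LinearOrder ι := LinearOrder.lift' b hb
  have hBT : M.BlockTriangular id := fun p q h => htri p q h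
  rw [Matrix.det_of_upperTriangular hBT]
  simp [hdiag]

/-- `lowPart` of a strictly lower triangular matrix is itself. -/
lemma lowPart_eq_self {n : ℕ} {M : Mat n} (h : ∀ a b : Fin (2 * n), ¬((b : ℕ) < (a : ℕ)) → M a b = 0) :
    lowPart n M = M := by
  ext a b
  rw [lowPart, Matrix.of_apply]
  split
  · rfl
  · rw [h a b (by assumption)]

lemma one_mem_Uset (n : ℕ) : (1 : Mat n) ∈ Uset n := by
  refine ⟨⟨⟨Matrix.det_one, by rw [Matrix.transpose_one, Matrix.one_mul, Matrix.mul_one]⟩, ?_⟩, fun i => Matrix.one_apply_eq i⟩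
  intro i j hij
  exact Matrix.one_apply_ne (by intro he; rw [he] at hij; omega)

end Statement9Aux

open Statement9Aux Matrix

/-- Let `w` be a basic involution in the Weyl group of type `Dₙ`,
`n ≥ 4`, and let `ξ₁ ≠ ξ₂` be maps `Supp(w) → ℂˣ` (i.e. differing at some root of the
support). Then the coadjoint `U`-orbits `Θ_{w,ξ₁}` and `Θ_{w,ξ₂}` are distinct. -/
theorem statement9 (n : ℕ) (hn : 4 ≤ n) (w : Equiv.Perm ℤ)
    (hw : IsBasicInvolution n w)
    (xi1 xi2 : Fin n × Fin n × Bool → ℂˣ)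
    (hne : ∃ r ∈ suppFinset n w, xi1 r ≠ xi2 r) :
    ThetaSet n w xi1 ≠ ThetaSet n w xi2 := by
  classical
  intro hTheta
  obtain ⟨hD, hInv, -⟩ := hw
  obtain ⟨hodd, -, -⟩ := hD
  have hww : ∀ x : ℤ, w (w x) = x := fun x => by
    simpa [Equiv.Perm.mul_apply] using congrArg (fun p : Equiv.Perm ℤ => p x) hInv
  -- `f₁ = f_{w,ξ₁}` lies in `Θ_{w,ξ₁}`, hence in `Θ_{w,ξ₂}`.
  have hf1T : fwxi n w xi1 ∈ ThetaSet n w xi1 := by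
    refine ⟨1, one_mem_Uset n, ?_⟩
    rw [coad, Matrix.inv_eq_left_inv (B := 1) (by rw [Matrix.one_mul]), Matrix.mul_one, Matrix.one_mul,
      lowPart_eq_self (fun a b hab => fwxi_lower hww hodd xi1 hab)]
  rw [hTheta] at hf1T
  obtain ⟨u, hu, hfeq⟩ := hf1T
  obtain ⟨⟨hSO, hup⟩, hdiag⟩ := hu
  -- basic facts about `u` and `u⁻¹`
  have hBT : u.BlockTriangular id := fun a b hab => hup a b hab
  have hdetu : u.det = 1 := by
    rw [Matrix.det_of_upperTriangular hBT]
    simp [hdiag]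
  have hdetUnit : IsUnit u.det := by rw [hdetu]; exact isUnit_one
  haveI : Invertible u := u.invertibleOfIsUnitDet hdetUnit
  have hBTinv : (u⁻¹).BlockTriangular id := Matrix.blockTriangular_inv_of_blockTriangular hBT
  have hupInv : ∀ a b : Fin (2 * n), (b : ℕ) < (a : ℕ) → u⁻¹ a b = 0 := fun a b hab =>
    hBTinv hab
  have huu : u * u⁻¹ = 1 := Matrix.mul_nonsing_inv u hdetUnit
  have hdiagInv : ∀ a, u⁻¹ a a = 1 := by
    intro a
    have h1 : (u * u⁻¹) a a = 1 := by rw [huu]; exact Matrix.one_apply_eq a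
    rw [Matrix.mul_apply, Finset.sum_eq_single a] at h1
    · rw [hdiag a, one_mul] at h1; exact h1
    · intro b _ hb
      rcases lt_or_gt_of_ne (fun he : (b : ℕ) = (a : ℕ) => hb (Fin.ext he)) with hlt | hlt
      · rw [hup a b hlt, zero_mul]
      · rw [hupInv b a hlt, mul_zero]
    · intro hab
      exact absurd (Finset.mem_univ a) hab
  -- choose a differing rook position with maximal `row - col`
  set S := suppFinset n w with hS
  set Pd : Finset (Idx n) :=
    Finset.univ.filter (fun k => k.1 ∈ S ∧ xi1 k.1 ≠ xi2 k.1) with hPd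
  have hPdne : Pd.Nonempty := by
    obtain ⟨r0, hr0, hne0⟩ := hne
    exact ⟨(r0, false), by simp [hPd]; exact ⟨hr0, hne0⟩⟩
  obtain ⟨k0, hk0Pd, hk0max⟩ :=
    Pd.exists_max_image (fun k => (rowF n k : ℕ) - (colF n k : ℕ)) hPdne
  rw [hPd, Finset.mem_filter] at hk0Pd
  obtain ⟨-, hk0S, hk0ne⟩ := hk0Pd
  have hb0a0 : (colF n k0 : ℕ) < (rowF n k0 : ℕ) := col_lt_row hww hodd hk0S
  -- the rooks in the region south-west of `k0`
  set R : Finset (Idx n) := Finset.univ.filter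
    (fun k => k.1 ∈ S ∧ (rowF n k0 : ℕ) ≤ (rowF n k : ℕ) ∧ (colF n k : ℕ) ≤ (colF n k0 : ℕ))
    with hR
  have hmemS : ∀ k ∈ R, k.1 ∈ S := fun k hk => ((Finset.mem_filter.mp hk).2).1
  have hmemRow : ∀ k ∈ R, (rowF n k0 : ℕ) ≤ (rowF n k : ℕ) := fun k hk =>
    ((Finset.mem_filter.mp hk).2).2.1
  have hmemCol : ∀ k ∈ R, (colF n k : ℕ) ≤ (colF n k0 : ℕ) := fun k hk =>
    ((Finset.mem_filter.mp hk).2).2.2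
  have hk0R : k0 ∈ R := by
    rw [hR, Finset.mem_filter]
    exact ⟨Finset.mem_univ _, hk0S, le_refl _, le_refl _⟩
  -- on the region, away from `k0`, the two maps agree
  have hagree : ∀ k ∈ R, k ≠ k0 → xi1 k.1 = xi2 k.1 := by
    intro k hkR hkne
    by_contra hc
    have hkPd : k ∈ Pd := by
      rw [hPd, Finset.mem_filter]
      exact ⟨Finset.mem_univ _, hmemS k hkR, hc⟩
    have hle := hk0max k hkPd
    have h1 := hmemRow k hkR
    have h2 := hmemCol k hkR
    have h3 := col_lt_row hww hodd (hmemS k hkR)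
    have hrowEq : (rowF n k : ℕ) = (rowF n k0 : ℕ) := by omega
    exact hkne (rowF_inj hww hodd (hmemS k hkR) hk0S (Fin.ext hrowEq))
  -- matrices indexed by the region
  set f1 := fwxi n w xi1 with hf1
  set f2 := fwxi n w xi2 with hf2
  set v1 : {x // x ∈ R} → ℂ := fun p => f1 (rowF n p.1) (colF n p.1) with hv1
  set v2 : {x // x ∈ R} → ℂ := fun p => f2 (rowF n p.1) (colF n p.1) with hv2
  set P : Matrix {x // x ∈ R} {x // x ∈ R} ℂ :=
    Matrix.of (fun p q => u (rowF n p.1) (rowF n q.1)) with hP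
  set Q : Matrix {x // x ∈ R} {x // x ∈ R} ℂ :=
    Matrix.of (fun p q => u⁻¹ (colF n p.1) (colF n q.1)) with hQ
  -- off-region-diagonal entries vanish
  have hDiag : ∀ (xi : Fin n × Fin n × Bool → ℂˣ) (p q : {x // x ∈ R}), p ≠ q →
      fwxi n w xi (rowF n p.1) (colF n q.1) = 0 := by
    intro xi p q hpq
    by_contra hc
    obtain ⟨k, hkS, hkr, hkc⟩ := fwxi_support w xi hc
    have hkR : k ∈ R := by
      rw [hR, Finset.mem_filter]
      refine ⟨Finset.mem_univ _, hkS, ?_, ?_⟩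
      · rw [hkr]; exact hmemRow p.1 p.2
      · rw [hkc]; exact hmemCol q.1 q.2
    have e1 : k = p.1 := rowF_inj hww hodd hkS (hmemS p.1 p.2) hkr
    have e2 : k = q.1 := colF_inj hww hodd hkS (hmemS q.1 q.2) hkc
    exact hpq (Subtype.ext (e1.symm.trans e2))
  have hD1 : (Matrix.of (fun p q => f1 (rowF n p.1) (colF n q.1)) :
      Matrix {x // x ∈ R} {x // x ∈ R} ℂ) = Matrix.diagonal v1 := by
    ext p q
    by_cases hpq : p = q
    · subst hpq
      rw [Matrix.of_apply, Matrix.diagonal_apply_eq]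
    · rw [Matrix.of_apply, Matrix.diagonal_apply_ne _ hpq]
      exact hDiag xi1 p q hpq
  have hD2 : (Matrix.of (fun p q => f2 (rowF n p.1) (colF n q.1)) :
      Matrix {x // x ∈ R} {x // x ∈ R} ℂ) = Matrix.diagonal v2 := by
    ext p q
    by_cases hpq : p = q
    · subst hpq
      rw [Matrix.of_apply, Matrix.diagonal_apply_eq]
    · rw [Matrix.of_apply, Matrix.diagonal_apply_ne _ hpq]
      exact hDiag xi2 p q hpq
  -- the key identity
  have hkey : ∀ p q : {x // x ∈ R},
      f1 (rowF n p.1) (colF n q.1) =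
        ∑ x : {x // x ∈ R}, u (rowF n p.1) (rowF n x.1) *
          (f2 (rowF n x.1) (colF n x.1) * u⁻¹ (colF n x.1) (colF n q.1)) := by
    intro p q
    have hlow : (colF n q.1 : ℕ) < (rowF n p.1 : ℕ) := by
      have e1 := hmemRow p.1 p.2
      have e2 := hmemCol q.1 q.2
      omega
    have hstep1 : f1 (rowF n p.1) (colF n q.1) =
        (u * f2 * u⁻¹) (rowF n p.1) (colF n q.1) := by
      rw [hfeq, coad, lowPart, Matrix.of_apply, if_pos hlow]
    rw [hstep1]
    set a := rowF n p.1
    set b := colF n q.1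
    have hexp : (u * f2 * u⁻¹) a b =
        ∑ x : Fin (2 * n) × Fin (2 * n), u a x.1 * (f2 x.1 x.2 * u⁻¹ x.2 b) := by
      rw [← Finset.univ_product_univ, Finset.sum_product]
      rw [Matrix.mul_apply]
      rw [Finset.sum_comm]
      refine Finset.sum_congr rfl fun l _ => ?_
      rw [Matrix.mul_apply, Finset.sum_mul]
      refine Finset.sum_congr rfl fun k _ => ?_
      ring
    rw [hexp]
    have hvan : ∀ x ∈ (Finset.univ : Finset (Fin (2 * n) × Fin (2 * n))),
        x ∉ R.image (fun k => (rowF n k, colF n k)) →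
        u a x.1 * (f2 x.1 x.2 * u⁻¹ x.2 b) = 0 := by
      intro x _ hx
      by_contra hG
      have hu1 : u a x.1 ≠ 0 := fun h => hG (by rw [h]; ring)
      have hf2x : f2 x.1 x.2 ≠ 0 := fun h => hG (by rw [h]; ring)
      have hu2 : u⁻¹ x.2 b ≠ 0 := fun h => hG (by rw [h]; ring)
      have hx1 : (a : ℕ) ≤ (x.1 : ℕ) := by
        by_contra hcc
        exact hu1 (hup a x.1 (by omega))
      have hx2 : (x.2 : ℕ) ≤ (b : ℕ) := by
        by_contra hcc
        exact hu2 (hupInv x.2 b (by omega))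
      obtain ⟨k, hkS, hkr, hkc⟩ := fwxi_support w xi2 hf2x
      have hkR : k ∈ R := by
        rw [hR, Finset.mem_filter]
        refine ⟨Finset.mem_univ _, hkS, ?_, ?_⟩
        · rw [hkr]
          have := hmemRow p.1 p.2
          omega
        · rw [hkc]
          have := hmemCol q.1 q.2
          omega
      exact hx (Finset.mem_image.mpr ⟨k, hkR, by rw [hkr, hkc]⟩)
    rw [← Finset.sum_subset (Finset.subset_univ _) hvan]
    have hinj : ∀ x ∈ R, ∀ y ∈ R,
        (fun k => (rowF n k, colF n k)) x = (fun k => (rowF n k, colF n k)) y → x = y := by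
      intro x hx y hy hxy
      have := congrArg Prod.fst hxy
      exact rowF_inj hww hodd (hmemS x hx) (hmemS y hy) this
    rw [Finset.sum_image hinj]
    rw [← Finset.sum_coe_sort R (fun k => u a (rowF n k) * (f2 (rowF n k) (colF n k) * u⁻¹ (colF n k) b))]
  -- assemble the matrix identity and take determinants
  have hMid : (Matrix.of (fun p q => f1 (rowF n p.1) (colF n q.1)) :
      Matrix {x // x ∈ R} {x // x ∈ R} ℂ) = P * Matrix.diagonal v2 * Q := by
    ext p q
    rw [Matrix.of_apply, hkey p q, Matrix.mul_apply]
    refine Finset.sum_congr rfl fun x _ => ?_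
    rw [Matrix.mul_diagonal]
    simp only [hP, hQ, hv2, Matrix.of_apply]
    ring
  have hdetP : P.det = 1 := by
    refine det_eq_one_of_upperTri P (fun p => rowF n p.1)
      (fun p q h => Subtype.ext (rowF_inj hww hodd (hmemS p.1 p.2) (hmemS q.1 q.2) h))
      (fun p q h => hup _ _ h) (fun p => hdiag _)
  have hdetQ : Q.det = 1 := by
    refine det_eq_one_of_upperTri Q (fun p => colF n p.1)
      (fun p q h => Subtype.ext (colF_inj hww hodd (hmemS p.1 p.2) (hmemS q.1 q.2) h))
      (fun p q h => hupInv _ _ h) (fun p => hdiagInv _)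
  have hprod : ∏ p : {x // x ∈ R}, v1 p = ∏ p : {x // x ∈ R}, v2 p := by
    have e1 : Matrix.det (Matrix.of (fun p q => f1 (rowF n p.1) (colF n q.1)) :
        Matrix {x // x ∈ R} {x // x ∈ R} ℂ) = ∏ p : {x // x ∈ R}, v1 p := by
      rw [hD1, Matrix.det_diagonal]
    have e2 : Matrix.det (Matrix.of (fun p q => f1 (rowF n p.1) (colF n q.1)) :
        Matrix {x // x ∈ R} {x // x ∈ R} ℂ) = ∏ p : {x // x ∈ R}, v2 p := by
      rw [hMid, Matrix.det_mul, Matrix.det_mul, hdetP, hdetQ, Matrix.det_diagonal]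
      ring
    rw [← e1, e2]
  -- compare the two products
  simp only [hv1, hv2] at hprod
  rw [Finset.prod_coe_sort R (fun k => f1 (rowF n k) (colF n k)),
    Finset.prod_coe_sort R (fun k => f2 (rowF n k) (colF n k))] at hprod
  rw [← Finset.mul_prod_erase R _ hk0R, ← Finset.mul_prod_erase R _ hk0R] at hprod
  have hsame : ∏ k ∈ R.erase k0, f1 (rowF n k) (colF n k) =
      ∏ k ∈ R.erase k0, f2 (rowF n k) (colF n k) := by
    refine Finset.prod_congr rfl fun k hk => ?_
    obtain ⟨hkne, hkR⟩ := Finset.mem_erase.mp hk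
    rw [hf1, hf2, fwxi_rook hww hodd xi1 (hmemS k hkR), fwxi_rook hww hodd xi2 (hmemS k hkR),
      hagree k hkR hkne]
  rw [hsame] at hprod
  have hnz : ∏ k ∈ R.erase k0, f2 (rowF n k) (colF n k) ≠ 0 := by
    rw [Finset.prod_ne_zero_iff]
    intro k hk
    obtain ⟨-, hkR⟩ := Finset.mem_erase.mp hk
    rw [hf2, fwxi_rook hww hodd xi2 (hmemS k hkR)]
    exact mul_ne_zero (sgnF_ne_zero k) (Units.ne_zero _)
  have hk0eq : f1 (rowF n k0) (colF n k0) = f2 (rowF n k0) (colF n k0) :=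
    mul_right_cancel₀ hnz hprod
  rw [hf1, hf2, fwxi_rook hww hodd xi1 hk0S, fwxi_rook hww hodd xi2 hk0S] at hk0eq
  have : (xi1 k0.1 : ℂ) = (xi2 k0.1 : ℂ) := mul_left_cancel₀ (sgnF_ne_zero k0) hk0eq
  exact hk0ne (Units.ext this)
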